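/- Let $g_r \in \mathbb{Z}_2[w_2,w_3,w_4]$ be defined by $g_0=1$, $g_{-1}=g_{-2}=g_{-3}=0$, and $g_r = w_2 g_{r-2} + w_3 g_{r-3} + w_4 g_{r-4}$ for $r\geq 1$. Then for every $m\geq 0$, the polynomial $g_{2^m-2}$ contains no monomial divisible by $w_4$; equivalently, $g_{2^m-2} \in \mathbb{Z}_2[w_2,w_3]$. -/
import Mathlib

open MvPolynomial

private lemma two_eq_zero' : (2 : MvPolynomial (Fin 3) (ZMod 2)) = 0 := by
  have := CharP.cast_eq_zero (MvPolynomial (Fin 3) (ZMod 2)) 2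
  exact_mod_cast this

private lemma gAB (g : ℤ → MvPolynomial (Fin 3) (ZMod 2))
    (hneg : ∀ r : ℤ, -3 ≤ r → r < 0 → g r = 0)
    (h0 : g 0 = 1)
    (hrec : ∀ r : ℤ, 1 ≤ r →
      g r = X 0 * g (r - 2) + X 1 * g (r - 3) + X 2 * g (r - 4)) :
    ∀ n : ℕ,
      (g (2*(n:ℤ)) = g (n:ℤ)^2 + X 0 * g ((n:ℤ)-1)^2 + X 2 * g ((n:ℤ)-2)^2) ∧
      (g (2*(n:ℤ)+1) = X 1 * g ((n:ℤ)-1)^2) := by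
  have gm1 : g (-1) = 0 := hneg _ (by norm_num) (by norm_num)
  have gm2 : g (-2) = 0 := hneg _ (by norm_num) (by norm_num)
  have gm3 : g (-3) = 0 := hneg _ (by norm_num) (by norm_num)
  have g1 : g 1 = 0 := by
    have := hrec 1 (by norm_num); norm_num [gm1, gm2, gm3] at this; exact this
  intro n
  induction n using Nat.strong_induction_on with
  | _ n IH =>
    match n with
    | 0 =>
      constructor
      · norm_num [h0, gm1, gm2]
      · norm_num [g1, gm1]
    | 1 =>
      have g2 : g 2 = X 0 := by
        have := hrec 2 (by norm_num); norm_num [h0, gm1, gm2] at this; exact this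
      have g3 : g 3 = X 1 := by
        have := hrec 3 (by norm_num); norm_num [h0, g1, gm1] at this; exact this
      constructor
      · norm_num [g2, g1, h0, gm1]
      · norm_num [g3, h0]
    | 2 =>
      have g2 : g 2 = X 0 := by
        have := hrec 2 (by norm_num); norm_num [h0, gm1, gm2] at this; exact this
      have g3 : g 3 = X 1 := by
        have := hrec 3 (by norm_num); norm_num [h0, g1, gm1] at this; exact this
      have g4 : g 4 = X 0 ^ 2 + X 2 := by
        have := hrec 4 (by norm_num); norm_num [h0, g1, g2] at this
        rw [this]; ring
      have g5 : g 5 = 0 := by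
        have := hrec 5 (by norm_num); norm_num [g1, g2, g3] at this
        rw [this]
        linear_combination (X 0 * X 1 : MvPolynomial (Fin 3) (ZMod 2)) * two_eq_zero'
      constructor
      · norm_num [g4, g2, g1, h0]
      · norm_num [g5, g1]
    | (k+3) =>
      set K : ℤ := (k : ℤ) with hK
      -- clean versions of the induction hypotheses
      have eA2 : g (2*K+4) = g (K+2)^2 + X 0 * g (K+1)^2 + X 2 * g K^2 := by
        have h := (IH (k+2) (by omega)).1
        push_cast at h
        rw [show 2*((K:ℤ)+2) = 2*K+4 by ring, show ((K:ℤ)+2)-1 = K+1 by ring,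
            show ((K:ℤ)+2)-2 = K by ring] at h
        exact h
      have eB2 : g (2*K+5) = X 1 * g (K+1)^2 := by
        have h := (IH (k+2) (by omega)).2
        push_cast at h
        rw [show 2*((K:ℤ)+2)+1 = 2*K+5 by ring, show ((K:ℤ)+2)-1 = K+1 by ring] at h
        exact h
      have eA1 : g (2*K+2) = g (K+1)^2 + X 0 * g K^2 + X 2 * g (K-1)^2 := by
        have h := (IH (k+1) (by omega)).1
        push_cast at h
        rw [show 2*((K:ℤ)+1) = 2*K+2 by ring, show ((K:ℤ)+1)-1 = K by ring,
            show ((K:ℤ)+1)-2 = K-1 by ring] at h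
        exact h
      have eB1 : g (2*K+3) = X 1 * g K^2 := by
        have h := (IH (k+1) (by omega)).2
        push_cast at h
        rw [show 2*((K:ℤ)+1)+1 = 2*K+3 by ring, show ((K:ℤ)+1)-1 = K by ring] at h
        exact h
      have er : g (K+3) = X 0 * g (K+1) + X 1 * g K + X 2 * g (K-1) := by
        have h := hrec (K+3) (by omega)
        rw [show (K:ℤ)+3-2 = K+1 by ring, show (K:ℤ)+3-3 = K by ring,
            show (K:ℤ)+3-4 = K-1 by ring] at h
        exact h
      have e6 : g (2*K+6) = X 0 * g (2*K+4) + X 1 * g (2*K+3) + X 2 * g (2*K+2) := by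
        have h := hrec (2*K+6) (by omega)
        rw [show 2*(K:ℤ)+6-2 = 2*K+4 by ring, show 2*(K:ℤ)+6-3 = 2*K+3 by ring,
            show 2*(K:ℤ)+6-4 = 2*K+2 by ring] at h
        exact h
      have e7 : g (2*K+7) = X 0 * g (2*K+5) + X 1 * g (2*K+4) + X 2 * g (2*K+3) := by
        have h := hrec (2*K+7) (by omega)
        rw [show 2*(K:ℤ)+7-2 = 2*K+5 by ring, show 2*(K:ℤ)+7-3 = 2*K+4 by ring,
            show 2*(K:ℤ)+7-4 = 2*K+3 by ring] at h
        exact h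
      constructor
      · -- A (k+3): g(2K+6) = g(K+3)^2 + X0 g(K+2)^2 + X2 g(K+1)^2
        push_cast
        rw [show 2*((K:ℤ)+3) = 2*K+6 by ring, show ((K:ℤ)+3)-1 = K+2 by ring,
            show ((K:ℤ)+3)-2 = K+1 by ring]
        rw [e6, eA2, eB1, eA1, er, add_pow_char (p:=2), add_pow_char (p:=2)]
        linear_combination (X 0 * X 2 * g K ^ 2 : MvPolynomial (Fin 3) (ZMod 2)) * two_eq_zero'
      · -- B (k+3): g(2K+7) = X1 g(K+2)^2
        push_cast
        rw [show 2*((K:ℤ)+3)+1 = 2*K+7 by ring, show ((K:ℤ)+3)-1 = K+2 by ring]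
        rw [e7, eB2, eA2, eB1]
        linear_combination (X 0 * X 1 * g (K+1)^2 + X 1 * X 2 * g K ^2) * two_eq_zero'

private lemma gC (g : ℤ → MvPolynomial (Fin 3) (ZMod 2))
    (hneg : ∀ r : ℤ, -3 ≤ r → r < 0 → g r = 0)
    (h0 : g 0 = 1)
    (hrec : ∀ r : ℤ, 1 ≤ r →
      g r = X 0 * g (r - 2) + X 1 * g (r - 3) + X 2 * g (r - 4)) :
    ∀ k : ℕ, g ((2:ℤ)^k - 3) = 0 := by
  intro k
  induction k using Nat.strong_induction_on with
  | _ k IH =>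
    match k with
    | 0 => exact hneg _ (by norm_num) (by norm_num)
    | 1 => exact hneg _ (by norm_num) (by norm_num)
    | (j+2) =>
      have hB := (gAB g hneg h0 hrec (2^(j+1) - 2)).2
      have hc : ((2^(j+1) - 2 : ℕ) : ℤ) = 2^(j+1) - 2 := by
        rw [Nat.cast_sub (Nat.one_lt_two_pow (by omega))]; push_cast; ring
      rw [hc] at hB
      rw [show (2:ℤ)^(j+2) - 3 = 2*((2:ℤ)^(j+1) - 2) + 1 by ring, hB,
          show (2:ℤ)^(j+1) - 2 - 1 = 2^(j+1) - 3 by ring, IH (j+1) (by omega)]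
      ring

private lemma gMain (g : ℤ → MvPolynomial (Fin 3) (ZMod 2))
    (hneg : ∀ r : ℤ, -3 ≤ r → r < 0 → g r = 0)
    (h0 : g 0 = 1)
    (hrec : ∀ r : ℤ, 1 ≤ r →
      g r = X 0 * g (r - 2) + X 1 * g (r - 3) + X 2 * g (r - 4)) :
    ∀ m : ℕ, g ((2:ℤ)^m - 2) ∈ supported (ZMod 2) ({0, 1} : Set (Fin 3)) := by
  intro m
  induction m using Nat.strong_induction_on with
  | _ m IH =>
    match m with
    | 0 =>
      rw [show (2:ℤ)^0 - 2 = -1 by norm_num, hneg (-1) (by norm_num) (by norm_num)]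
      exact Subalgebra.zero_mem _
    | 1 =>
      rw [show (2:ℤ)^1 - 2 = 0 by norm_num, h0]
      exact Subalgebra.one_mem _
    | (j+2) =>
      have hA := (gAB g hneg h0 hrec (2^(j+1) - 1)).1
      have hc : ((2^(j+1) - 1 : ℕ) : ℤ) = 2^(j+1) - 1 := by
        rw [Nat.cast_sub Nat.one_le_two_pow]; push_cast; ring
      rw [hc] at hA
      have hB : g ((2:ℤ)^(j+1) - 1) = X 1 * g ((2:ℤ)^j - 2)^2 := by
        have h := (gAB g hneg h0 hrec (2^j - 1)).2
        have hc2 : ((2^j - 1 : ℕ) : ℤ) = 2^j - 1 := by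
          rw [Nat.cast_sub Nat.one_le_two_pow]; push_cast; ring
        rw [hc2, show 2*((2:ℤ)^j - 1) + 1 = 2^(j+1) - 1 by ring,
            show (2:ℤ)^j - 1 - 1 = 2^j - 2 by ring] at h
        exact h
      rw [show (2:ℤ)^(j+2) - 2 = 2*((2:ℤ)^(j+1) - 1) by ring, hA, hB,
          show (2:ℤ)^(j+1) - 1 - 1 = 2^(j+1) - 2 by ring,
          show (2:ℤ)^(j+1) - 1 - 2 = 2^(j+1) - 3 by ring,
          gC g hneg h0 hrec (j+1)]
      have h1 : g ((2:ℤ)^j - 2) ∈ supported (ZMod 2) ({0, 1} : Set (Fin 3)) :=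
        IH j (by omega)
      have h2 : g ((2:ℤ)^(j+1) - 2) ∈ supported (ZMod 2) ({0, 1} : Set (Fin 3)) :=
        IH (j+1) (by omega)
      have hX0 : (X 0 : MvPolynomial (Fin 3) (ZMod 2)) ∈ supported (ZMod 2) ({0, 1} : Set (Fin 3)) :=
        X_mem_supported.2 (by simp)
      have hX1 : (X 1 : MvPolynomial (Fin 3) (ZMod 2)) ∈ supported (ZMod 2) ({0, 1} : Set (Fin 3)) :=
        X_mem_supported.2 (by simp)
      refine Subalgebra.add_mem _ (Subalgebra.add_mem _ ?_ ?_) ?_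
      · exact Subalgebra.pow_mem _ (Subalgebra.mul_mem _ hX1 (Subalgebra.pow_mem _ h1 2)) 2
      · exact Subalgebra.mul_mem _ hX0 (Subalgebra.pow_mem _ h2 2)
      · rw [zero_pow (by norm_num), mul_zero]; exact Subalgebra.zero_mem _

/-- In `ℤ₂[w₂,w₃,w₄]` (with `X 0 = w₂`, `X 1 = w₃`, `X 2 = w₄`), with the
sequence `g_r` as above, for every `m ≥ 0` the polynomial `g_{2^m - 2}` contains no
monomial divisible by `w₄`, i.e. every exponent vector in its support has `w₄`-exponent
`0` (equivalently `g_{2^m-2} ∈ ℤ₂[w₂,w₃]`). -/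
theorem stmt_5 (g : ℤ → MvPolynomial (Fin 3) (ZMod 2))
    (hneg : ∀ r : ℤ, -3 ≤ r → r < 0 → g r = 0)
    (h0 : g 0 = 1)
    (hrec : ∀ r : ℤ, 1 ≤ r →
      g r = X 0 * g (r - 2) + X 1 * g (r - 3) + X 2 * g (r - 4)) :
    ∀ m : ℕ, ∀ d ∈ (g ((2 : ℤ) ^ m - 2)).support, d 2 = 0 := by
  intro m d hd
  have hmem := gMain g hneg h0 hrec m
  rw [mem_supported] at hmem
  by_contra h
  have h2 : (2 : Fin 3) ∈ (g ((2 : ℤ) ^ m - 2)).vars := by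
    rw [mem_vars]
    exact ⟨d, hd, Finsupp.mem_support_iff.2 h⟩
  have := hmem h2
  simp at this
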